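/- Let X be a pointed metric space, let F be a locally convex space and let T : Lip₀(X) → F be a linear map. Then T is continuous for the topology τ_γ if and only if the restriction of T to each norm-bounded subset B of Lip₀(X) is continuous for the topology induced by τ₀ on B. -/

import Mathlib

open Filter Topology Set Pointwise

set_option linter.unusedSectionVars false
set_option linter.unusedVariables false

noncomputable section

namespace LipApprox

variable (X : Type*) [MetricSpace X] (x₀ : X)
variable (F : Type*) [NormedAddCommGroup F] [NormedSpace ℝ F]

/-- The Lipschitz maps `X → F` vanishing at the base point, as a submodule of `X → F`. -/
def lip0Submodule : Submodule ℝ (X → F) where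
  carrier := {f | (∃ K, LipschitzWith K f) ∧ f x₀ = 0}
  add_mem' := by
    rintro f g ⟨⟨Kf, hf⟩, hf0⟩ ⟨⟨Kg, hg⟩, hg0⟩
    exact ⟨⟨Kf + Kg, hf.add hg⟩, by simp [hf0, hg0]⟩
  zero_mem' := ⟨⟨0, LipschitzWith.const 0⟩, rfl⟩
  smul_mem' := by
    rintro c f ⟨⟨K, hf⟩, hf0⟩
    exact ⟨⟨‖c‖₊ * K, (lipschitzWith_smul c).comp hf⟩, by simp [hf0]⟩

/-- The space `Lip₀(X, F)` of Lipschitz maps from `X` to `F` vanishing at the base point. -/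
def lip0 : Type _ := ↥(lip0Submodule X x₀ F)

instance : AddCommGroup (lip0 X x₀ F) :=
  inferInstanceAs (AddCommGroup ↥(lip0Submodule X x₀ F))

instance : Module ℝ (lip0 X x₀ F) :=
  inferInstanceAs (Module ℝ ↥(lip0Submodule X x₀ F))

variable {X x₀ F}

/-- The underlying function of an element of `Lip₀(X, F)`. -/
def toFun' (f : lip0 X x₀ F) : X → F := f.1

lemma exists_lip (f : lip0 X x₀ F) : ∃ K, LipschitzWith K (toFun' f) := f.2.1

lemma apply_base (f : lip0 X x₀ F) : toFun' f x₀ = 0 := f.2.2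

lemma toFun'_add (f g : lip0 X x₀ F) : toFun' (f + g) = toFun' f + toFun' g := rfl
lemma toFun'_neg (f : lip0 X x₀ F) : toFun' (-f) = -toFun' f := rfl
lemma toFun'_smul (c : ℝ) (f : lip0 X x₀ F) : toFun' (c • f) = c • toFun' f := rfl
lemma toFun'_zero : toFun' (0 : lip0 X x₀ F) = 0 := rfl

variable (X x₀ F) in
/-- The Lipschitz norm of an element of `Lip₀(X, F)`. -/
def lipNorm (f : lip0 X x₀ F) : ℝ :=
  ⨆ p : X × X, ‖toFun' f p.1 - toFun' f p.2‖ / dist p.1 p.2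

lemma ratio_le (f : lip0 X x₀ F) {K : NNReal} (hK : LipschitzWith K (toFun' f))
    (p : X × X) : ‖toFun' f p.1 - toFun' f p.2‖ / dist p.1 p.2 ≤ K := by
  rcases eq_or_ne p.1 p.2 with h | h
  · simp [h]
  · rw [div_le_iff₀ (dist_pos.2 h), ← dist_eq_norm]
    exact hK.dist_le_mul p.1 p.2

lemma bddAbove_ratio (f : lip0 X x₀ F) :
    BddAbove (Set.range fun p : X × X =>
      ‖toFun' f p.1 - toFun' f p.2‖ / dist p.1 p.2) := by
  obtain ⟨K, hK⟩ := exists_lip f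
  exact ⟨K, by rintro r ⟨p, rfl⟩; exact ratio_le f hK p⟩

lemma nonempty_pairs (x₀ : X) : Nonempty (X × X) := ⟨(x₀, x₀)⟩

lemma ratio_le_lipNorm (f : lip0 X x₀ F) (p : X × X) :
    ‖toFun' f p.1 - toFun' f p.2‖ / dist p.1 p.2 ≤ lipNorm X x₀ F f :=
  le_ciSup (bddAbove_ratio f) p

lemma lipNorm_nonneg (f : lip0 X x₀ F) : 0 ≤ lipNorm X x₀ F f := by
  have := ratio_le_lipNorm (x₀ := x₀) f (x₀, x₀)
  simpa using this

lemma norm_sub_le_lipNorm (f : lip0 X x₀ F) (x y : X) :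
    ‖toFun' f x - toFun' f y‖ ≤ lipNorm X x₀ F f * dist x y := by
  rcases eq_or_ne x y with rfl | h
  · simp
  · have := ratio_le_lipNorm (x₀ := x₀) f (x, y)
    rw [div_le_iff₀ (dist_pos.2 h)] at this
    simpa using this

instance : NormedAddCommGroup (lip0 X x₀ F) :=
  AddGroupNorm.toNormedAddCommGroup
    { toFun := lipNorm X x₀ F
      map_zero' := by
        haveI : Nonempty (X × X) := nonempty_pairs x₀
        have h0 : ∀ p : X × X,
            ‖toFun' (0 : lip0 X x₀ F) p.1 - toFun' (0 : lip0 X x₀ F) p.2‖ /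
              dist p.1 p.2 = 0 := by
          intro p; rw [toFun'_zero]; simp
        simp only [lipNorm, h0, ciSup_const]
      add_le' := by
        intro f g
        haveI : Nonempty (X × X) := nonempty_pairs x₀
        apply ciSup_le
        intro p
        rcases eq_or_ne p.1 p.2 with h | h
        · simp only [h, dist_self, div_zero]
          exact add_nonneg (lipNorm_nonneg f) (lipNorm_nonneg g)
        · have hnum : ‖toFun' (f + g) p.1 - toFun' (f + g) p.2‖ ≤
              ‖toFun' f p.1 - toFun' f p.2‖ + ‖toFun' g p.1 - toFun' g p.2‖ := by
            rw [toFun'_add, Pi.add_apply, Pi.add_apply, add_sub_add_comm]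
            exact norm_add_le _ _
          calc ‖toFun' (f + g) p.1 - toFun' (f + g) p.2‖ / dist p.1 p.2
              ≤ (‖toFun' f p.1 - toFun' f p.2‖ +
                  ‖toFun' g p.1 - toFun' g p.2‖) / dist p.1 p.2 := by gcongr
            _ = ‖toFun' f p.1 - toFun' f p.2‖ / dist p.1 p.2 +
                  ‖toFun' g p.1 - toFun' g p.2‖ / dist p.1 p.2 := add_div _ _ _
            _ ≤ lipNorm X x₀ F f + lipNorm X x₀ F g :=
                add_le_add (ratio_le_lipNorm f p) (ratio_le_lipNorm g p)
      neg' := by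
        intro f
        simp only [lipNorm]
        congr 1
        funext p
        congr 1
        rw [toFun'_neg, Pi.neg_apply, Pi.neg_apply, neg_sub_neg, norm_sub_rev]
      eq_zero_of_map_eq_zero' := by
        intro f hf
        have hzero : ∀ x : X, toFun' f x = 0 := by
          intro x
          rcases eq_or_ne x x₀ with h | h
          · rw [h]; exact apply_base f
          · have hf' : lipNorm X x₀ F f = 0 := hf
            have h1 := ratio_le_lipNorm (x₀ := x₀) f (x, x₀)
            rw [hf', div_le_iff₀ (dist_pos.2 h), zero_mul] at h1
            have h2 : toFun' f x - toFun' f x₀ = 0 := by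
              simpa using norm_le_zero_iff.1 h1
            have h3 := apply_base f
            rw [h3, sub_zero] at h2
            exact h2
        exact Subtype.ext (funext hzero) }

lemma lip0_norm_def (f : lip0 X x₀ F) : ‖f‖ = lipNorm X x₀ F f := rfl

instance : NormedSpace ℝ (lip0 X x₀ F) where
  norm_smul_le c f := by
    haveI : Nonempty (X × X) := nonempty_pairs x₀
    rw [lip0_norm_def, lip0_norm_def, lipNorm]
    apply ciSup_le
    intro p
    have h1 : toFun' (c • f) p.1 - toFun' (c • f) p.2 =
        c • (toFun' f p.1 - toFun' f p.2) := by
      rw [toFun'_smul, Pi.smul_apply, Pi.smul_apply, smul_sub]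
    rw [h1, norm_smul]
    rcases eq_or_ne p.1 p.2 with h | h
    · simp only [h, dist_self, div_zero]
      exact mul_nonneg (norm_nonneg c) (lipNorm_nonneg f)
    · rw [mul_div_assoc]
      exact mul_le_mul_of_nonneg_left (ratio_le_lipNorm (x₀ := x₀) f p) (norm_nonneg c)

variable (X x₀ F)

/-- Elements of `Lip₀(X, F)` as continuous maps. -/
def toCM (f : lip0 X x₀ F) : C(X, F) :=
  ⟨toFun' f, by
    obtain ⟨K, hK⟩ := exists_lip f
    exact hK.continuous⟩

/-- The compact-open topology `τ₀` on `Lip₀(X, F)`. -/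
def tau0 : TopologicalSpace (lip0 X x₀ F) :=
  TopologicalSpace.induced (toCM X x₀ F) ContinuousMap.compactOpen

/-- The set `γ(U) = ⋃ₙ (U₀ ∩ B + U₁ ∩ 2B + ⋯ + Uₙ ∩ 2ⁿB)` from the definition of the
mixed topology, where `B` is the closed unit ball of `Lip₀(X, F)`. -/
def gammaSet (U : ℕ → Set (lip0 X x₀ F)) : Set (lip0 X x₀ F) :=
  ⋃ n : ℕ, ∑ i ∈ Finset.range (n + 1), (U i ∩ {f | ‖f‖ ≤ 2 ^ i})

/-- The mixed topology `τ_γ = γ[Lip, τ₀]` on `Lip₀(X, F)`: the topology whose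
neighborhoods of a point `f` are generated by the translates by `f` of the sets `γ(U)`,
where `U` runs over all sequences of convex balanced `τ₀`-neighborhoods of zero. -/
def tauGamma : TopologicalSpace (lip0 X x₀ F) :=
  TopologicalSpace.mkOfNhds fun f =>
    ⨅ (U : ℕ → Set (lip0 X x₀ F))
      (_ : ∀ n, U n ∈ @nhds _ (tau0 X x₀ F) 0 ∧ Convex ℝ (U n) ∧ Balanced ℝ (U n)),
      Filter.principal ((f + ·) '' gammaSet X x₀ F U)

/-- A subset of `Lip₀(X, F)` is norm bounded if the Lipschitz norms of its members are
uniformly bounded. -/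
def NormBounded (B : Set (lip0 X x₀ F)) : Prop :=
  ∃ C : ℝ, ∀ f ∈ B, ‖f‖ ≤ C

/-- The locally convex topology `γτ_γ` on `Lip₀(X, F)`, generated by the seminorms
`f ↦ sup_n αₙ ‖f xₙ - f yₙ‖ / d(xₙ, yₙ)` where `(αₙ)` is a sequence of positive reals
tending to zero and `((xₙ, yₙ))` is a sequence of pairs of distinct points of `X`. -/
def gammaTauGamma : TopologicalSpace (lip0 X x₀ F) :=
  ⨅ (α : ℕ → ℝ) (z : ℕ → X × X)
    (_ : (∀ n, 0 < α n) ∧ Filter.Tendsto α Filter.atTop (nhds 0) ∧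
      ∀ n, (z n).1 ≠ (z n).2),
    TopologicalSpace.induced
      (fun f => UniformFun.ofFun fun n =>
        (α n / dist (z n).1 (z n).2) • (toFun' f (z n).1 - toFun' f (z n).2))
      inferInstance

/-- Evaluation at a point of `X`, as a linear functional on `Lip₀(X)`. -/
def evalLM (x : X) : lip0 X x₀ ℝ →ₗ[ℝ] ℝ where
  toFun f := toFun' f x
  map_add' f g := rfl
  map_smul' c f := rfl

/-- Evaluation at a point of `X`, as a continuous linear functional on `Lip₀(X)`. -/
def evalCLM (x : X) : lip0 X x₀ ℝ →L[ℝ] ℝ :=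
  LinearMap.mkContinuous (evalLM X x₀ x) (dist x x₀)
    (fun f => by
      have h0 : toFun' f x₀ = 0 := apply_base f
      have h := norm_sub_le_lipNorm (x₀ := x₀) f x x₀
      rw [h0, sub_zero] at h
      calc ‖evalLM X x₀ x f‖ ≤ lipNorm X x₀ ℝ f * dist x x₀ := h
        _ = dist x x₀ * ‖f‖ := by rw [lip0_norm_def, mul_comm])

/-- The Lipschitz-free space `F(X)`: the closed linear span of the evaluation
functionals inside the dual of `Lip₀(X)`. -/
def freeSpace : Submodule ℝ (lip0 X x₀ ℝ →L[ℝ] ℝ) :=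
  (Submodule.span ℝ (Set.range (evalCLM X x₀))).topologicalClosure

/-- The Dirac map `δ : X → F(X)`. -/
def deltaF (x : X) : freeSpace X x₀ :=
  ⟨evalCLM X x₀ x,
    Submodule.le_topologicalClosure _ (Submodule.subset_span (Set.mem_range_self x))⟩

/-- For a normed space `G`, the topology on the dual `G'` of uniform convergence on the
convex balanced compact subsets of `G` (the topology of `G'_c`). -/
def dualcTop (G : Type*) [NormedAddCommGroup G] [NormedSpace ℝ G] :
    TopologicalSpace (G →L[ℝ] ℝ) :=
  TopologicalSpace.induced
    (fun φ => UniformOnFun.ofFun {L : Set G | IsCompact L ∧ Convex ℝ L ∧ Balanced ℝ L} ⇑φ)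
    inferInstance


/-! ### Auxiliary material for `stmt1` -/

section Aux

variable {X : Type*} [MetricSpace X] {x₀ : X}

/-- Basis of `τ₀`-neighborhoods of a point `b`. -/
lemma tau0_nhds_basis (b : lip0 X x₀ ℝ) :
    (@nhds _ (tau0 X x₀ ℝ) b).HasBasis
      (fun Kε : Set X × ℝ => IsCompact Kε.1 ∧ 0 < Kε.2)
      (fun Kε => {g : lip0 X x₀ ℝ | ∀ x ∈ Kε.1, dist (toFun' b x) (toFun' g x) < Kε.2}) := by
  have h : (𝓝 (toCM X x₀ ℝ b)).HasBasis (fun Kε : Set X × ℝ => IsCompact Kε.1 ∧ 0 < Kε.2)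
      (fun Kε => {g : C(X,ℝ) | ∀ x ∈ Kε.1, dist (toCM X x₀ ℝ b x) (g x) < Kε.2}) := by
    rw [nhds_eq_comap_uniformity]
    exact (Metric.uniformity_basis_dist.compactConvergenceUniformity).comap _
  have := h.comap (toCM X x₀ ℝ)
  rw [show Filter.comap (toCM X x₀ ℝ) (𝓝 (toCM X x₀ ℝ b)) = @nhds _ (tau0 X x₀ ℝ) b from
    (nhds_induced _ _).symm] at this
  exact this

/-- The seminorm-ball sets generating `τ₀` around `0`. -/
def Sset (K : Set X) (ε : ℝ) : Set (lip0 X x₀ ℝ) :=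
  {g | ∀ x ∈ K, |toFun' g x| ≤ ε}

lemma Sset_convex (K : Set X) (ε : ℝ) : Convex ℝ (Sset (x₀ := x₀) K ε) := by
  intro g hg h hh a c ha hc hac
  intro x hx
  have : toFun' (a • g + c • h) x = a * toFun' g x + c * toFun' h x := by
    rw [toFun'_add, toFun'_smul, toFun'_smul]; rfl
  rw [this]
  calc |a * toFun' g x + c * toFun' h x| ≤ |a * toFun' g x| + |c * toFun' h x| := abs_add_le _ _
    _ = a * |toFun' g x| + c * |toFun' h x| := by
        rw [abs_mul, abs_mul, abs_of_nonneg ha, abs_of_nonneg hc]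
    _ ≤ a * ε + c * ε := by
        gcongr <;> [exact hg x hx; exact hh x hx]
    _ = ε := by rw [← add_mul, hac, one_mul]

lemma Sset_balanced (K : Set X) (ε : ℝ) : Balanced ℝ (Sset (x₀ := x₀) K ε) := by
  intro a ha
  rintro _ ⟨g, hg, rfl⟩ x hx
  have : toFun' (a • g) x = a * toFun' g x := by rw [toFun'_smul]; rfl
  rw [this, abs_mul]
  calc |a| * |toFun' g x| ≤ 1 * ε := by
        apply mul_le_mul ha (hg x hx) (abs_nonneg _) zero_le_one
    _ = ε := one_mul ε

lemma Sset_mem_nhds {K : Set X} {ε : ℝ} (hK : IsCompact K) (hε : 0 < ε) :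
    Sset (x₀ := x₀) K ε ∈ @nhds _ (tau0 X x₀ ℝ) 0 := by
  refine Filter.mem_of_superset ((tau0_nhds_basis 0).mem_of_mem (i := (K, ε)) ⟨hK, hε⟩) ?_
  intro g hg x hx
  have := hg x hx
  rw [toFun'_zero] at this
  simp only [Pi.zero_apply, Real.dist_eq, zero_sub, abs_neg] at this
  exact le_of_lt this

lemma exists_Sset_subset {V : Set (lip0 X x₀ ℝ)} (hV : V ∈ @nhds _ (tau0 X x₀ ℝ) 0) :
    ∃ (K : Set X) (ε : ℝ), IsCompact K ∧ 0 < ε ∧ Sset (x₀ := x₀) K ε ⊆ V := by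
  obtain ⟨⟨K, ε⟩, ⟨hK, hε⟩, hsub⟩ := (tau0_nhds_basis (x₀ := x₀) 0).mem_iff.mp hV
  refine ⟨K, ε / 2, hK, half_pos hε, fun g hg => hsub ?_⟩
  intro x hx
  have := hg x hx
  rw [toFun'_zero]
  simp only [Pi.zero_apply, Real.dist_eq, zero_sub, abs_neg]
  exact lt_of_le_of_lt this (half_lt_self hε)

lemma gammaSet_mono {U V : ℕ → Set (lip0 X x₀ ℝ)} (h : ∀ n, U n ⊆ V n) :
    gammaSet X x₀ ℝ U ⊆ gammaSet X x₀ ℝ V :=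
  Set.iUnion_mono fun n =>
    Set.finset_sum_subset_finset_sum _ _ _ fun i _ =>
      Set.inter_subset_inter_left _ (h i)

lemma isOpen_tauGamma_iff {s : Set (lip0 X x₀ ℝ)} :
    IsOpen[tauGamma X x₀ ℝ] s ↔ ∀ f ∈ s, s ∈
      ⨅ (U : ℕ → Set (lip0 X x₀ ℝ))
        (_ : ∀ n, U n ∈ @nhds _ (tau0 X x₀ ℝ) 0 ∧ Convex ℝ (U n) ∧ Balanced ℝ (U n)),
        Filter.principal ((f + ·) '' gammaSet X x₀ ℝ U) := Iff.rfl

end Aux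
/-- Let `X` be a pointed metric space, `F` a locally convex space and
`T : Lip₀(X) → F` a linear map. Then `T` is `τ_γ`-continuous iff its restriction to each
norm-bounded subset `B` of `Lip₀(X)` is continuous for the topology induced by `τ₀`. -/
theorem stmt1 (X : Type*) [MetricSpace X] (x₀ : X)
    (F : Type*) [AddCommGroup F] [Module ℝ F] [TopologicalSpace F]
    [IsTopologicalAddGroup F] [ContinuousSMul ℝ F] [LocallyConvexSpace ℝ F]
    (T : lip0 X x₀ ℝ →ₗ[ℝ] F) :
    @Continuous _ _ (tauGamma X x₀ ℝ) _ T ↔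
      ∀ B : Set (lip0 X x₀ ℝ), NormBounded X x₀ ℝ B →
        @Continuous _ _ (TopologicalSpace.induced ((↑) : B → lip0 X x₀ ℝ) (tau0 X x₀ ℝ)) _
          (fun b : B => T b) := by
  constructor
  · -- `τ_γ`-continuity implies continuity on bounded sets
    intro hT B hB
    obtain ⟨C, hC⟩ := hB
    letI tB : TopologicalSpace ↥B := TopologicalSpace.induced ((↑) : B → lip0 X x₀ ℝ) (tau0 X x₀ ℝ)
    rw [continuous_iff_continuousAt]
    intro b
    have hnb : (𝓝 b : Filter ↥B) =
        Filter.comap ((↑) : B → lip0 X x₀ ℝ) (@nhds _ (tau0 X x₀ ℝ) ↑b) := by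
      letI := tau0 X x₀ ℝ
      exact nhds_induced _ _
    unfold ContinuousAt
    rw [hnb, Filter.tendsto_def]
    intro W hW
    obtain ⟨W', hW'W, hW'open, hbW'⟩ := mem_nhds_iff.mp hW
    have hopen : IsOpen[tauGamma X x₀ ℝ] (T ⁻¹' W') :=
      (@continuous_def _ _ (tauGamma X x₀ ℝ) _ T).mp hT W' hW'open
    have hmem0 := isOpen_tauGamma_iff.mp hopen (b : lip0 X x₀ ℝ) hbW'
    -- extract a single sequence `U` from the directed infimum
    set P : (ℕ → Set (lip0 X x₀ ℝ)) → Prop := fun U =>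
      ∀ n, U n ∈ @nhds _ (tau0 X x₀ ℝ) 0 ∧ Convex ℝ (U n) ∧ Balanced ℝ (U n) with hP
    rw [iInf_subtype'] at hmem0
    haveI : Nonempty {U : ℕ → Set (lip0 X x₀ ℝ) // P U} :=
      ⟨⟨fun _ => Set.univ, fun n => ⟨Filter.univ_mem, convex_univ, balanced_univ⟩⟩⟩
    have hdir : Directed (· ≥ ·) fun U : {U : ℕ → Set (lip0 X x₀ ℝ) // P U} =>
        Filter.principal (((b : lip0 X x₀ ℝ) + ·) '' gammaSet X x₀ ℝ U.1) := by
      rintro ⟨U, hU⟩ ⟨V, hV⟩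
      refine ⟨⟨fun n => U n ∩ V n, fun n =>
        ⟨Filter.inter_mem (hU n).1 (hV n).1, (hU n).2.1.inter (hV n).2.1,
          (hU n).2.2.inter (hV n).2.2⟩⟩, ?_, ?_⟩
      · exact Filter.principal_mono.mpr
          (Set.image_mono (gammaSet_mono fun n => Set.inter_subset_left))
      · exact Filter.principal_mono.mpr
          (Set.image_mono (gammaSet_mono fun n => Set.inter_subset_right))
    rw [Filter.mem_iInf_of_directed hdir] at hmem0
    obtain ⟨⟨U, hU⟩, hmem⟩ := hmem0
    rw [Filter.mem_principal] at hmem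
    -- choose n with 2*C ≤ 2^n
    obtain ⟨n, hn⟩ := pow_unbounded_of_one_lt (2 * C) (by norm_num : (1:ℝ) < 2)
    obtain ⟨K, ε, hK, hε, hSsub⟩ := exists_Sset_subset (hU n).1
    -- the τ₀-neighborhood of b given by (K, ε)
    rw [Filter.mem_comap]
    refine ⟨{g : lip0 X x₀ ℝ | ∀ x ∈ K, dist (toFun' (b : lip0 X x₀ ℝ) x) (toFun' g x) < ε},
      (tau0_nhds_basis _).mem_of_mem (i := (K, ε)) ⟨hK, hε⟩, ?_⟩
    rintro ⟨g, hgB⟩ hg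
    simp only [Set.mem_preimage, Set.mem_setOf_eq] at hg ⊢
    -- show g - b ∈ U n ∩ 2^n-ball
    have hgb : g - (b : lip0 X x₀ ℝ) ∈ U n ∩ {f : lip0 X x₀ ℝ | ‖f‖ ≤ 2 ^ n} := by
      constructor
      · apply hSsub
        intro x hx
        have h1 := hg x hx
        rw [Real.dist_eq] at h1
        have : toFun' (g - (b : lip0 X x₀ ℝ)) x = toFun' g x - toFun' (b : lip0 X x₀ ℝ) x := by
          have := toFun'_add (g) (-(b : lip0 X x₀ ℝ))
          rw [toFun'_neg] at this
          calc toFun' (g - (b : lip0 X x₀ ℝ)) x = (toFun' g + -toFun' (b : lip0 X x₀ ℝ)) x := by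
                rw [← this]; rfl
            _ = toFun' g x - toFun' (b : lip0 X x₀ ℝ) x := rfl
        rw [this]
        rw [abs_sub_comm] at h1
        exact le_of_lt h1
      · have h1 : ‖g - (b : lip0 X x₀ ℝ)‖ ≤ ‖g‖ + ‖(b : lip0 X x₀ ℝ)‖ := norm_sub_le _ _
        have h2 : ‖g‖ ≤ C := hC g hgB
        have h3 : ‖(b : lip0 X x₀ ℝ)‖ ≤ C := hC _ b.2
        have : ‖g - (b : lip0 X x₀ ℝ)‖ ≤ 2 * C := by linarith
        exact le_trans this (le_of_lt hn)
    -- hence g ∈ b + gammaSet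
    have hgmem : g ∈ ((b : lip0 X x₀ ℝ) + ·) '' gammaSet X x₀ ℝ U := by
      refine ⟨g - (b : lip0 X x₀ ℝ), ?_, add_sub_cancel _ _⟩
      refine Set.mem_iUnion.mpr ⟨n, ?_⟩
      classical
      have hsum : (∑ i ∈ Finset.range (n + 1),
          (if i = n then g - (b : lip0 X x₀ ℝ) else 0)) = g - (b : lip0 X x₀ ℝ) := by
        rw [Finset.sum_ite_eq' (Finset.range (n+1)) n
          (fun _ => g - (b : lip0 X x₀ ℝ))]
        simp
      rw [← hsum]
      refine Set.finset_sum_mem_finset_sum _ _ _ fun i hi => ?_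
      by_cases h : i = n
      · subst h; simpa using hgb
      · simp only [if_neg h]
        have h0 : (0 : lip0 X x₀ ℝ) ∈ U i := by
          letI := tau0 X x₀ ℝ
          exact mem_of_mem_nhds (hU i).1
        refine ⟨h0, ?_⟩
        simp only [Set.mem_setOf_eq, norm_zero]
        positivity
    exact hW'W (hmem hgmem)
  · -- continuity on bounded sets implies `τ_γ`-continuity
    intro h
    rw [@continuous_def _ _ (tauGamma X x₀ ℝ) _]
    intro W hWopen
    rw [isOpen_tauGamma_iff]
    intro f hf
    -- translate W to a neighborhood of 0
    have hWnhds : W ∈ 𝓝 (T f) := hWopen.mem_nhds hf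
    have hW0 : (fun y => T f + y) ⁻¹' W ∈ 𝓝 (0 : F) := by
      have : ContinuousAt (fun y => T f + y) (0 : F) :=
        (continuous_const.add continuous_id).continuousAt
      apply this.preimage_mem_nhds
      simpa using hWnhds
    -- a chain of neighborhoods of 0 in F
    have step : ∀ s : Set F, s ∈ 𝓝 (0:F) →
        ∃ v, v ∈ 𝓝 (0:F) ∧ ∀ a ∈ v, ∀ c ∈ v, a + c ∈ s := by
      intro s hs
      obtain ⟨v, hv, hv2⟩ := exists_nhds_zero_half hs
      exact ⟨v, hv, hv2⟩
    choose! v hv1 hv2 using step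
    set Wseq : ℕ → Set F := fun n => Nat.rec ((fun y => T f + y) ⁻¹' W) (fun _ s => v s) n
      with hWseq_def
    have hWseq : ∀ n, Wseq n ∈ 𝓝 (0:F) := by
      intro n
      induction n with
      | zero => exact hW0
      | succ k ih => exact hv1 _ ih
    have hWhalf : ∀ n, ∀ a ∈ Wseq (n+1), ∀ c ∈ Wseq (n+1), a + c ∈ Wseq n := by
      intro n
      exact hv2 _ (hWseq n)
    -- sums of tail elements land in earlier sets
    have hsum_claim : ∀ (n k : ℕ) (x : ℕ → F),
        (∀ i ∈ Finset.range (n+1), x i ∈ Wseq (k + i + 1)) →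
        (∑ i ∈ Finset.range (n+1), x i) ∈ Wseq k := by
      intro n
      induction n with
      | zero =>
        intro k x hx
        have h0 : x 0 ∈ Wseq (k + 1) := by simpa using hx 0 (by simp)
        have hz : (0:F) ∈ Wseq (k+1) := mem_of_mem_nhds (hWseq (k+1))
        have := hWhalf k (x 0) h0 0 hz
        simpa using this
      | succ m ih =>
        intro k x hx
        rw [Finset.sum_range_succ']
        have htail : (∑ i ∈ Finset.range (m+1), x (i+1)) ∈ Wseq (k+1) := by
          apply ih (k+1)
          intro i hi
          have heq : k + 1 + i + 1 = k + (i + 1) + 1 := by omega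
          rw [heq]
          refine hx (i+1) ?_
          rw [Finset.mem_range] at hi ⊢
          omega
        have hhead : x 0 ∈ Wseq (k + 1) := by
          have := hx 0 (by simp)
          simpa using this
        exact hWhalf k _ htail _ hhead
    -- for each i choose a basic τ₀-neighborhood
    have hUex : ∀ i : ℕ, ∃ U : Set (lip0 X x₀ ℝ),
        (U ∈ @nhds _ (tau0 X x₀ ℝ) 0 ∧ Convex ℝ U ∧ Balanced ℝ U) ∧
        ∀ g : lip0 X x₀ ℝ, ‖g‖ ≤ 2 ^ i → g ∈ U → T g ∈ Wseq (i+1) := by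
      intro i
      set B : Set (lip0 X x₀ ℝ) := {g | ‖g‖ ≤ 2 ^ i} with hBdef
      have hBb : NormBounded X x₀ ℝ B := ⟨2 ^ i, fun g hg => hg⟩
      letI tB : TopologicalSpace ↥B := TopologicalSpace.induced ((↑) : B → lip0 X x₀ ℝ) (tau0 X x₀ ℝ)
      have hcont := h B hBb
      have hz : (0 : lip0 X x₀ ℝ) ∈ B := by
        simp only [hBdef, Set.mem_setOf_eq, norm_zero]
        positivity
      have htend := hcont.tendsto (⟨0, hz⟩ : B)
      have hT0 : T ((⟨0, hz⟩ : B) : lip0 X x₀ ℝ) = 0 := map_zero T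
      rw [hT0] at htend
      have hnb : (𝓝 (⟨0, hz⟩ : B) : Filter ↥B) =
          Filter.comap ((↑) : B → lip0 X x₀ ℝ) (@nhds _ (tau0 X x₀ ℝ) 0) := by
        letI := tau0 X x₀ ℝ
        exact nhds_induced _ _
      have hpre := htend (hWseq (i+1))
      rw [hnb, Filter.mem_map, Filter.mem_comap] at hpre
      obtain ⟨V, hV, hVsub⟩ := hpre
      obtain ⟨K, ε, hK, hε, hSsub⟩ := exists_Sset_subset hV
      refine ⟨Sset K ε, ⟨Sset_mem_nhds hK hε, Sset_convex K ε, Sset_balanced K ε⟩, ?_⟩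
      intro g hgnorm hgS
      have : (⟨g, hgnorm⟩ : B) ∈ ((↑) : B → lip0 X x₀ ℝ) ⁻¹' V := hSsub hgS
      exact hVsub this
    choose U hU1 hU2 using hUex
    -- conclude: f + gammaSet U ⊆ T⁻¹ W
    have hle : (⨅ (U : ℕ → Set (lip0 X x₀ ℝ))
        (_ : ∀ n, U n ∈ @nhds _ (tau0 X x₀ ℝ) 0 ∧ Convex ℝ (U n) ∧ Balanced ℝ (U n)),
        Filter.principal ((f + ·) '' gammaSet X x₀ ℝ U)) ≤
        Filter.principal ((f + ·) '' gammaSet X x₀ ℝ U) :=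
      iInf_le_of_le U (iInf_le _ hU1)
    apply hle
    rw [Filter.mem_principal]
    rintro _ ⟨g, hg, rfl⟩
    obtain ⟨n, hgn⟩ := Set.mem_iUnion.mp hg
    rw [Set.mem_finset_sum] at hgn
    obtain ⟨x, hx, hxsum⟩ := hgn
    have hTg : T g ∈ Wseq 0 := by
      rw [← hxsum, map_sum]
      apply hsum_claim n 0
      intro i hi
      obtain ⟨hxi1, hxi2⟩ := hx hi
      simpa using hU2 i (x i) hxi2 hxi1
    have : T f + T g ∈ W := hTg
    simpa [map_add] using this

end LipApprox
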